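/- For every natural number k and every x ∈ S, the k-th Bellman iterate of ψ is nonnegative and concave in the belief variable: the map p ↦ (B^k ψ)(p,x) is concave on [0,1] and satisfies (B^k ψ)(p,x) ≥ 0 for all p ∈ [0,1]. -/

import Mathlib

open Finset Filter Topology

noncomputable section

/-- `p̄ = p + ρ(1-p)`, the predicted change probability. -/
def pbar (ρ p : ℝ) : ℝ := p + ρ * (1 - p)

/-- Likelihood ratio `L(x',x) = Q₂(x'|x) / Q₁(x'|x)`. -/
def likeRatio {S : Type*} (Q1 Q2 : S → S → ℝ) (x' x : S) : ℝ := Q2 x x' / Q1 x x'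

/-- Bayesian posterior update `Φ(x',x,p)`. -/
def post {S : Type*} (Q1 Q2 : S → S → ℝ) (ρ : ℝ) (x' x : S) (p : ℝ) : ℝ :=
  pbar ρ p * likeRatio Q1 Q2 x' x / (pbar ρ p * likeRatio Q1 Q2 x' x + (1 - pbar ρ p))

/-- Predictive probability `P(x'|p,x)`. -/
def pred {S : Type*} (Q1 Q2 : S → S → ℝ) (ρ : ℝ) (x' : S) (p : ℝ) (x : S) : ℝ :=
  (1 - pbar ρ p) * Q1 x x' + pbar ρ p * Q2 x x'

/-- The Bellman operator `B`. -/
def bell {S : Type*} [Fintype S] (Q1 Q2 : S → S → ℝ) (ρ lam : ℝ)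
    (V : ℝ → S → ℝ) : ℝ → S → ℝ :=
  fun p x => min (lam * (1 - p))
    (p + ∑ x' : S, pred Q1 Q2 ρ x' p x * V (post Q1 Q2 ρ x' x p) x')

/-- The stopping cost `ψ(p,x) = λ(1-p)`. -/
def psi (S : Type*) (lam : ℝ) : ℝ → S → ℝ := fun p _ => lam * (1 - p)

/-- affine functions are concave on any convex set -/
lemma affine_concaveOn (c d : ℝ) :
    ConcaveOn ℝ (Set.Icc (0 : ℝ) 1) (fun p => c + d * p) := by
  refine ⟨convex_Icc 0 1, ?_⟩
  intro p _ q _ a b ha hb hab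
  simp only [smul_eq_mul]
  have hb' : b = 1 - a := by linarith
  subst hb'
  apply le_of_eq
  ring

/-- sum of concave functions is concave -/
lemma concaveOn_sum {ι : Type*} (t : Finset ι) (f : ι → ℝ → ℝ)
    (hf : ∀ i ∈ t, ConcaveOn ℝ (Set.Icc (0 : ℝ) 1) (f i)) :
    ConcaveOn ℝ (Set.Icc (0 : ℝ) 1) (fun p => ∑ i ∈ t, f i p) := by
  induction t using Finset.cons_induction with
  | empty => simpa using concaveOn_const (0 : ℝ) (convex_Icc 0 1)
  | cons i t hi ih =>
    simp only [Finset.sum_cons]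
    exact ConcaveOn.add (hf i (Finset.mem_cons_self i t))
      (ih fun j hj => hf j (Finset.mem_cons_of_mem hj))

/-- perspective-type concavity: `p ↦ A(p) V(N(p)/A(p))` is concave for affine `A, N`. -/
lemma perspective_concaveOn (V : ℝ → ℝ) (hV : ConcaveOn ℝ (Set.Icc (0 : ℝ) 1) V)
    (c d c' d' : ℝ)
    (hA : ∀ p ∈ Set.Icc (0 : ℝ) 1, 0 < c + d * p)
    (hN : ∀ p ∈ Set.Icc (0 : ℝ) 1, 0 ≤ c' + d' * p)
    (hNA : ∀ p ∈ Set.Icc (0 : ℝ) 1, c' + d' * p ≤ c + d * p) :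
    ConcaveOn ℝ (Set.Icc (0 : ℝ) 1)
      (fun p => (c + d * p) * V ((c' + d' * p) / (c + d * p))) := by
  refine ⟨convex_Icc 0 1, ?_⟩
  intro p hp q hq a b ha hb hab
  have hmem : a • p + b • q ∈ Set.Icc (0 : ℝ) 1 :=
    (convex_Icc (0:ℝ) 1) hp hq ha hb hab
  set r := a • p + b • q with hr
  have hA1 := hA p hp
  have hA2 := hA q hq
  have hAr := hA r hmem
  have hAsum : c + d * r = a * (c + d * p) + b * (c + d * q) := by
    simp only [hr, smul_eq_mul]; linear_combination (-c) * hab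
  have hNsum : c' + d' * r = a * (c' + d' * p) + b * (c' + d' * q) := by
    simp only [hr, smul_eq_mul]; linear_combination (-c') * hab
  set s := a * (c + d * p) / (c + d * r) with hs
  set s' := b * (c + d * q) / (c + d * r) with hs'
  have hs0 : 0 ≤ s := div_nonneg (mul_nonneg ha hA1.le) hAr.le
  have hs'0 : 0 ≤ s' := div_nonneg (mul_nonneg hb hA2.le) hAr.le
  have hss : s + s' = 1 := by
    rw [hs, hs', ← add_div, hAsum]
    exact div_self (by rw [← hAsum]; exact hAr.ne')
  have hmem1 : (c' + d' * p) / (c + d * p) ∈ Set.Icc (0 : ℝ) 1 :=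
    ⟨div_nonneg (hN p hp) hA1.le, (div_le_one hA1).mpr (hNA p hp)⟩
  have hmem2 : (c' + d' * q) / (c + d * q) ∈ Set.Icc (0 : ℝ) 1 :=
    ⟨div_nonneg (hN q hq) hA2.le, (div_le_one hA2).mpr (hNA q hq)⟩
  have hkey : (c' + d' * r) / (c + d * r) =
      s • ((c' + d' * p) / (c + d * p)) + s' • ((c' + d' * q) / (c + d * q)) := by
    simp only [hs, hs', smul_eq_mul]
    rw [hNsum]
    rw [div_mul_div_comm, mul_right_comm a, mul_div_mul_right _ _ hA1.ne',
      div_mul_div_comm, mul_right_comm b, mul_div_mul_right _ _ hA2.ne', add_div]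
  have hjensen := hV.2 hmem1 hmem2 hs0 hs'0 hss
  rw [← hkey] at hjensen
  simp only [smul_eq_mul] at hjensen ⊢
  have := mul_le_mul_of_nonneg_left hjensen hAr.le
  calc a * ((c + d * p) * V ((c' + d' * p) / (c + d * p))) +
        b * ((c + d * q) * V ((c' + d' * q) / (c + d * q)))
      = (c + d * r) * (s * V ((c' + d' * p) / (c + d * p)) +
          s' * V ((c' + d' * q) / (c + d * q))) := by
        simp only [hs, hs']
        field_simp
    _ ≤ (c + d * r) * V ((c' + d' * r) / (c + d * r)) := this

theorem stmt_5 {S : Type*} [Fintype S] [Nonempty S]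
    (Q1 Q2 : S → S → ℝ)
    (hQ1pos : ∀ x x', 0 < Q1 x x') (hQ2pos : ∀ x x', 0 < Q2 x x')
    (hQ1row : ∀ x, ∑ x', Q1 x x' = 1) (hQ2row : ∀ x, ∑ x', Q2 x x' = 1)
    (ρ : ℝ) (hρ : ρ ∈ Set.Ioo (0 : ℝ) 1)
    (lam : ℝ) (hlam : 0 < lam) :
    ∀ (k : ℕ) (x : S),
      ConcaveOn ℝ (Set.Icc (0 : ℝ) 1)
        (fun p => ((bell Q1 Q2 ρ lam)^[k] (psi S lam)) p x) ∧
      ∀ p ∈ Set.Icc (0 : ℝ) 1,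
        0 ≤ ((bell Q1 Q2 ρ lam)^[k] (psi S lam)) p x := by
  obtain ⟨hρ0, hρ1⟩ := hρ
  -- basic facts about pbar
  have hpbar_pos : ∀ p ∈ Set.Icc (0:ℝ) 1, 0 < pbar ρ p := by
    intro p hp; obtain ⟨hp0, hp1⟩ := hp; unfold pbar; nlinarith
  have hpbar_le : ∀ p ∈ Set.Icc (0:ℝ) 1, pbar ρ p ≤ 1 := by
    intro p hp; obtain ⟨hp0, hp1⟩ := hp; unfold pbar; nlinarith
  -- predictive probability as affine function
  have hpred_eq : ∀ (x x' : S) (p : ℝ), pred Q1 Q2 ρ x' p x =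
      (Q1 x x' + ρ * (Q2 x x' - Q1 x x')) + ((1 - ρ) * (Q2 x x' - Q1 x x')) * p := by
    intro x x' p; unfold pred pbar; ring
  have hpred_pos : ∀ (x x' : S), ∀ p ∈ Set.Icc (0:ℝ) 1, 0 < pred Q1 Q2 ρ x' p x := by
    intro x x' p hp
    have h1 := hpbar_pos p hp
    have h2 := hpbar_le p hp
    unfold pred
    have : 0 ≤ (1 - pbar ρ p) * Q1 x x' :=
      mul_nonneg (by linarith) (hQ1pos x x').le
    nlinarith [hQ2pos x x']
  -- numerator as affine function
  have hnum_eq : ∀ (x x' : S) (p : ℝ), pbar ρ p * Q2 x x' =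
      (ρ * Q2 x x') + ((1 - ρ) * Q2 x x') * p := by
    intro x x' p; unfold pbar; ring
  have hnum_nonneg : ∀ (x x' : S), ∀ p ∈ Set.Icc (0:ℝ) 1, 0 ≤ pbar ρ p * Q2 x x' := by
    intro x x' p hp; exact mul_nonneg (hpbar_pos p hp).le (hQ2pos x x').le
  have hnum_le : ∀ (x x' : S), ∀ p ∈ Set.Icc (0:ℝ) 1,
      pbar ρ p * Q2 x x' ≤ pred Q1 Q2 ρ x' p x := by
    intro x x' p hp
    unfold pred
    have : 0 ≤ (1 - pbar ρ p) * Q1 x x' :=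
      mul_nonneg (by linarith [hpbar_le p hp]) (hQ1pos x x').le
    linarith
  -- posterior identity
  have hpost_eq : ∀ (x x' : S), ∀ p ∈ Set.Icc (0:ℝ) 1,
      post Q1 Q2 ρ x' x p = (pbar ρ p * Q2 x x') / pred Q1 Q2 ρ x' p x := by
    intro x x' p hp
    have hQ1ne := (hQ1pos x x').ne'
    have hApos := hpred_pos x x' p hp
    have hden : pbar ρ p * likeRatio Q1 Q2 x' x + (1 - pbar ρ p) =
        pred Q1 Q2 ρ x' p x / Q1 x x' := by
      unfold likeRatio pred
      field_simp
      ring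
    unfold post
    rw [hden]
    unfold likeRatio
    rw [← mul_div_assoc]
    rw [div_div_div_eq]
    rw [mul_comm (Q1 x x') (pred Q1 Q2 ρ x' p x), mul_div_mul_right _ _ hQ1ne]
  have hpost_mem : ∀ (x x' : S), ∀ p ∈ Set.Icc (0:ℝ) 1,
      post Q1 Q2 ρ x' x p ∈ Set.Icc (0:ℝ) 1 := by
    intro x x' p hp
    rw [hpost_eq x x' p hp]
    have hApos := hpred_pos x x' p hp
    exact ⟨div_nonneg (hnum_nonneg x x' p hp) hApos.le,
      (div_le_one hApos).mpr (hnum_le x x' p hp)⟩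
  -- the inductive step
  intro k
  induction k with
  | zero =>
    intro x
    simp only [Function.iterate_zero, id_eq, psi]
    constructor
    · have := (affine_concaveOn lam (-lam))
      convert this using 2 with p
      ring
    · intro p hp
      have := hp.2
      nlinarith
  | succ k ih =>
    intro x
    have hconc : ∀ x' : S, ConcaveOn ℝ (Set.Icc (0:ℝ) 1)
        (fun p => pred Q1 Q2 ρ x' p x *
          ((bell Q1 Q2 ρ lam)^[k] (psi S lam)) (post Q1 Q2 ρ x' x p) x') := by
      intro x'
      have hkey := perspective_concaveOn
        (fun r => ((bell Q1 Q2 ρ lam)^[k] (psi S lam)) r x') (ih x').1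
        (Q1 x x' + ρ * (Q2 x x' - Q1 x x')) ((1 - ρ) * (Q2 x x' - Q1 x x'))
        (ρ * Q2 x x') ((1 - ρ) * Q2 x x')
        (fun p hp => by rw [← hpred_eq]; exact hpred_pos x x' p hp)
        (fun p hp => by rw [← hnum_eq]; exact hnum_nonneg x x' p hp)
        (fun p hp => by rw [← hnum_eq, ← hpred_eq]; exact hnum_le x x' p hp)
      refine ConcaveOn.congr hkey ?_
      intro p hp
      simp only
      rw [← hpred_eq, ← hnum_eq, ← hpost_eq x x' p hp]
    have hnn : ∀ x' : S, ∀ p ∈ Set.Icc (0:ℝ) 1,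
        0 ≤ pred Q1 Q2 ρ x' p x *
          ((bell Q1 Q2 ρ lam)^[k] (psi S lam)) (post Q1 Q2 ρ x' x p) x' := by
      intro x' p hp
      exact mul_nonneg (hpred_pos x x' p hp).le
        ((ih x').2 _ (hpost_mem x x' p hp))
    constructor
    · rw [Function.iterate_succ_apply']
      show ConcaveOn ℝ (Set.Icc (0:ℝ) 1) (fun p => min (lam * (1 - p))
        (p + ∑ x' : S, pred Q1 Q2 ρ x' p x *
          ((bell Q1 Q2 ρ lam)^[k] (psi S lam)) (post Q1 Q2 ρ x' x p) x'))
      have h1 : ConcaveOn ℝ (Set.Icc (0:ℝ) 1) (fun p => lam * (1 - p)) := by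
        have := affine_concaveOn lam (-lam)
        refine ConcaveOn.congr this ?_
        intro p _; simp only; ring
      have h2 : ConcaveOn ℝ (Set.Icc (0:ℝ) 1) (fun p => p + ∑ x' : S,
          pred Q1 Q2 ρ x' p x *
          ((bell Q1 Q2 ρ lam)^[k] (psi S lam)) (post Q1 Q2 ρ x' x p) x') := by
        have hid : ConcaveOn ℝ (Set.Icc (0:ℝ) 1) (fun p : ℝ => p) :=
          concaveOn_id (convex_Icc 0 1)
        exact ConcaveOn.add hid (concaveOn_sum Finset.univ _ (fun x' _ => hconc x'))
      exact ConcaveOn.inf h1 h2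
    · intro p hp
      rw [Function.iterate_succ_apply']
      show 0 ≤ min (lam * (1 - p)) (p + ∑ x' : S, pred Q1 Q2 ρ x' p x *
          ((bell Q1 Q2 ρ lam)^[k] (psi S lam)) (post Q1 Q2 ρ x' x p) x')
      refine le_min (mul_nonneg hlam.le (by linarith [hp.2])) ?_
      have : 0 ≤ ∑ x' : S, pred Q1 Q2 ρ x' p x *
          ((bell Q1 Q2 ρ lam)^[k] (psi S lam)) (post Q1 Q2 ρ x' x p) x' :=
        Finset.sum_nonneg (fun x' _ => hnn x' p hp)
      linarith [hp.1]
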